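/- Let Δ = Δ_0 + Δ_1 + ⋯ + Δ_k be a Minkowski sum decomposition of a reflexive polytope Δ ⊂ ℝ^d into lattice polytopes, σ̄∨ ⊂ ℝ^d ⊕ ℝ^{k+1} the dual of the Cayley cone, n_σ̄ = r_0* + ⋯ + r_k* and m_{σ̄∨} = r_0 + ⋯ + r_k. Then: (i) the linear map from the hyperplane m_{σ̄∨}^⊥ ⊂ ℝ^d ⊕ ℝ^{k+1} to ℝ^d ⊕ ℝ^k sending (n, α_0, …, α_k) to (n, α_1, …, α_k) maps σ̄∨_{(k+1)} − n_σ̄ bijectively onto (k+1)·Conv({u − Σ_{i=1}^k min⟨Δ_i,u⟩ e_i* : u ∈ Δ*} ∪ {e_1*, …, e_k*}) − (e_1* + ⋯ + e_k*), where σ̄∨_{(k+1)} = {y ∈ σ̄∨ : ⟨m_{σ̄∨}, y⟩ = k+1}; and (ii) the linear map π : ℝ^d ⊕ ℝ^{k+1} → ℝ^d ⊕ ℝ^k sending (n, α_0, …, α_k) to (n, α_1 − α_0, …, α_k − α_0) satisfies π(σ̄∨_{(1)}) = Conv({u − Σ_{i=0}^k min⟨Δ_i,u⟩ e_i* : u ∈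 Δ*} ∪ {e_0*, e_1*, …, e_k*}), where σ̄∨_{(1)} = {y ∈ σ̄∨ : ⟨m_{σ̄∨}, y⟩ = 1} and e_0* := −(e_1* + ⋯ + e_k*). -/

import Mathlib

open scoped Pointwise
open Set

noncomputable section

/-- The standard pairing on `ℝ^n`. -/
def pairing {n : ℕ} (x y : Fin n → ℝ) : ℝ := ∑ i, x i * y i

/-- A point of `ℝ^n` lying in the lattice `ℤ^n`. -/
def IsLatticePt {n : ℕ} (x : Fin n → ℝ) : Prop := ∀ i, ∃ z : ℤ, x i = (z : ℝ)

/-- A lattice polytope: the convex hull of finitely many lattice points. -/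
def IsLatticePolytope {n : ℕ} (P : Set (Fin n → ℝ)) : Prop :=
  ∃ S : Set (Fin n → ℝ), S.Finite ∧ (∀ x ∈ S, IsLatticePt x) ∧ P = convexHull ℝ S

/-- The dual polytope `P* = {y | ⟨x,y⟩ ≥ -1 ∀ x ∈ P}`. -/
def polarDual {n : ℕ} (P : Set (Fin n → ℝ)) : Set (Fin n → ℝ) :=
  {y | ∀ x ∈ P, -1 ≤ pairing x y}

/-- A reflexive polytope. -/
def IsReflexive {n : ℕ} (P : Set (Fin n → ℝ)) : Prop :=
  IsLatticePolytope P ∧ (0 : Fin n → ℝ) ∈ interior P ∧ IsLatticePolytope (polarDual P)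

/-- `min⟨P, u⟩ = min_{x ∈ P} ⟨x, u⟩`. -/
def minPair {n : ℕ} (P : Set (Fin n → ℝ)) (u : Fin n → ℝ) : ℝ :=
  sInf ((fun x => pairing x u) '' P)

/-- The real vector space `ℝ^d ⊕ ℝ^k`. -/
abbrev Vdk (d k : ℕ) := (Fin d → ℝ) × (Fin k → ℝ)

/-- The pairing on `ℝ^d ⊕ ℝ^k` (sum of the two standard pairings). -/
def pairingV {d k : ℕ} (x y : Vdk d k) : ℝ := pairing x.1 y.1 + pairing x.2 y.2

def IsLatticePtV {d k : ℕ} (x : Vdk d k) : Prop := IsLatticePt x.1 ∧ IsLatticePt x.2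

def IsLatticePolytopeV {d k : ℕ} (P : Set (Vdk d k)) : Prop :=
  ∃ S : Set (Vdk d k), S.Finite ∧ (∀ x ∈ S, IsLatticePtV x) ∧ P = convexHull ℝ S

def polarDualV {d k : ℕ} (P : Set (Vdk d k)) : Set (Vdk d k) :=
  {y | ∀ x ∈ P, -1 ≤ pairingV x y}

def IsReflexiveV {d k : ℕ} (P : Set (Vdk d k)) : Prop :=
  IsLatticePolytopeV P ∧ (0 : Vdk d k) ∈ interior P ∧ IsLatticePolytopeV (polarDualV P)

/-- The Cayley cone `σ̄ = {(t₀Δ₀ + ⋯ + t_kΔ_k, t₀, …, t_k) : tᵢ ≥ 0} ⊆ ℝ^d ⊕ ℝ^{k+1}`. -/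
def cayleyCone {d k : ℕ} (Δ : Fin (k+1) → Set (Fin d → ℝ)) : Set (Vdk d (k+1)) :=
  {p | (∀ i, 0 ≤ p.2 i) ∧ p.1 ∈ ∑ i, p.2 i • Δ i}

/-- The dual cone of a cone in `ℝ^d ⊕ ℝ^k`. -/
def dualConeV {d k : ℕ} (σ : Set (Vdk d k)) : Set (Vdk d k) :=
  {y | ∀ x ∈ σ, 0 ≤ pairingV x y}

/-- `e₀* = −(e₁* + ⋯ + e_k*)`, `eᵢ*` the standard basis of the second factor `ℝ^k`. -/
def estar {k : ℕ} : Fin (k+1) → Fin k → ℝ :=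
  Fin.cases (fun _ => -1) (fun i => Pi.single i 1)

-- pairing lemmas
lemma pairing_add_left {n : ℕ} (x y u : Fin n → ℝ) :
    pairing (x + y) u = pairing x u + pairing y u := by
  simp [pairing, add_mul, Finset.sum_add_distrib]

lemma pairing_smul_left {n : ℕ} (c : ℝ) (x u : Fin n → ℝ) :
    pairing (c • x) u = c * pairing x u := by
  simp [pairing, Finset.mul_sum, mul_assoc]

lemma pairing_zero_left {n : ℕ} (u : Fin n → ℝ) : pairing 0 u = 0 := by simp [pairing]

lemma pairing_zero_right {n : ℕ} (x : Fin n → ℝ) : pairing x 0 = 0 := by simp [pairing]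

lemma pairing_comm {n : ℕ} (x y : Fin n → ℝ) : pairing x y = pairing y x := by
  simp [pairing, mul_comm]

lemma pairing_smul_right {n : ℕ} (c : ℝ) (x u : Fin n → ℝ) :
    pairing x (c • u) = c * pairing x u := by
  rw [pairing_comm, pairing_smul_left, pairing_comm]

lemma pairing_add_right {n : ℕ} (x u v : Fin n → ℝ) :
    pairing x (u + v) = pairing x u + pairing x v := by
  rw [pairing_comm, pairing_add_left, pairing_comm u x, pairing_comm v x]

lemma continuous_pairing {n : ℕ} (u : Fin n → ℝ) : Continuous fun x : Fin n → ℝ => pairing x u := by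
  unfold pairing
  exact continuous_finset_sum _ fun i _ => (continuous_apply i).mul continuous_const

lemma pairing_sum_left {n : ℕ} {ι : Type*} (s : Finset ι) (f : ι → (Fin n → ℝ)) (u : Fin n → ℝ) :
    pairing (∑ i ∈ s, f i) u = ∑ i ∈ s, pairing (f i) u := by
  classical
  induction s using Finset.induction_on with
  | empty => simp [pairing_zero_left]
  | insert a s h ih => rw [Finset.sum_insert h, Finset.sum_insert h, pairing_add_left, ih]

-- minPair lemmas
lemma IsLatticePolytope.isCompact {n : ℕ} {P : Set (Fin n → ℝ)} (h : IsLatticePolytope P) :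
    IsCompact P := by
  obtain ⟨S, hS, -, rfl⟩ := h
  exact hS.isCompact_convexHull ℝ

lemma minPair_isLeast {n : ℕ} {P : Set (Fin n → ℝ)} (h : IsLatticePolytope P)
    (hne : P.Nonempty) (u : Fin n → ℝ) :
    IsLeast ((fun x => pairing x u) '' P) (minPair P u) := by
  obtain ⟨a, ha⟩ := (h.isCompact.image (continuous_pairing u)).exists_isLeast (hne.image _)
  rwa [minPair, ha.csInf_eq]

lemma minPair_le {n : ℕ} {P : Set (Fin n → ℝ)} (h : IsLatticePolytope P)
    (hne : P.Nonempty) {x : Fin n → ℝ} (hx : x ∈ P) (u : Fin n → ℝ) :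
    minPair P u ≤ pairing x u :=
  (minPair_isLeast h hne u).2 ⟨x, hx, rfl⟩

lemma minPair_exists {n : ℕ} {P : Set (Fin n → ℝ)} (h : IsLatticePolytope P)
    (hne : P.Nonempty) (u : Fin n → ℝ) :
    ∃ x ∈ P, pairing x u = minPair P u := by
  obtain ⟨x, hx, hx'⟩ := (minPair_isLeast h hne u).1
  exact ⟨x, hx, hx'⟩

lemma minPair_zero {n : ℕ} {P : Set (Fin n → ℝ)} (h : IsLatticePolytope P)
    (hne : P.Nonempty) : minPair P 0 = 0 := by
  obtain ⟨x, hx, hx'⟩ := minPair_exists h hne 0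
  rw [← hx', pairing_zero_right]

lemma minPair_smul {n : ℕ} {P : Set (Fin n → ℝ)} (h : IsLatticePolytope P)
    (hne : P.Nonempty) {c : ℝ} (hc : 0 ≤ c) (u : Fin n → ℝ) :
    minPair P (c • u) = c * minPair P u := by
  obtain ⟨x, hx, hx'⟩ := minPair_exists h hne u
  obtain ⟨y, hy, hy'⟩ := minPair_exists h hne (c • u)
  refine le_antisymm ?_ ?_
  · calc minPair P (c • u) ≤ pairing x (c • u) := minPair_le h hne hx _
      _ = c * minPair P u := by rw [pairing_smul_right, hx']
  · have h1 : c * minPair P u ≤ c * pairing y u :=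
      mul_le_mul_of_nonneg_left (minPair_le h hne hy u) hc
    rw [← hy', pairing_smul_right]
    exact h1

lemma minPair_concave {n : ℕ} {P : Set (Fin n → ℝ)} (h : IsLatticePolytope P)
    (hne : P.Nonempty) {a b : ℝ} (ha : 0 ≤ a) (hb : 0 ≤ b) (u v : Fin n → ℝ) :
    a * minPair P u + b * minPair P v ≤ minPair P (a • u + b • v) := by
  obtain ⟨x, hx, hx'⟩ := minPair_exists h hne (a • u + b • v)
  rw [← hx', pairing_add_right, pairing_smul_right, pairing_smul_right]
  gcongr
  · exact minPair_le h hne hx u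
  · exact minPair_le h hne hx v

lemma pairing_neg_left {n : ℕ} (x u : Fin n → ℝ) : pairing (-x) u = -pairing x u := by
  simp [pairing]

lemma pairing_single_left {n : ℕ} (i : Fin n) (c : ℝ) (v : Fin n → ℝ) :
    pairing (Pi.single i c) v = c * v i := by
  simp [pairing, Pi.single_apply, Finset.sum_ite_eq]

lemma pairing_self_pos {n : ℕ} {u : Fin n → ℝ} (hu : u ≠ 0) : 0 < pairing u u := by
  obtain ⟨i, hi⟩ := Function.ne_iff.mp hu
  refine Finset.sum_pos' (fun j _ => mul_self_nonneg _) ⟨i, Finset.mem_univ i, ?_⟩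
  exact mul_self_pos.mpr hi

lemma minPair_neg_of_interior {n : ℕ} {P : Set (Fin n → ℝ)} (h : IsLatticePolytope P)
    (h0 : (0 : Fin n → ℝ) ∈ interior P) {u : Fin n → ℝ} (hu : u ≠ 0) : minPair P u < 0 := by
  rw [mem_interior_iff_mem_nhds, Metric.mem_nhds_iff] at h0
  obtain ⟨ε, hε, hball⟩ := h0
  set c : ℝ := ε / (2 * (‖u‖ + 1)) with hc
  have hunorm : (0:ℝ) < ‖u‖ + 1 := by positivity
  have hcpos : 0 < c := by positivity
  have hx : -(c • u) ∈ P := by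
    apply hball
    rw [Metric.mem_ball, dist_zero_right, norm_neg, norm_smul, Real.norm_eq_abs,
      abs_of_pos hcpos]
    have h1 : c * ‖u‖ < c * (‖u‖ + 1) := by nlinarith
    have h2 : c * (‖u‖ + 1) = ε / 2 := by rw [hc]; field_simp
    linarith
  have hne : P.Nonempty := ⟨_, hx⟩
  have hle := minPair_le h hne hx u
  rw [pairing_neg_left, pairing_smul_left] at hle
  have := pairing_self_pos hu
  nlinarith

section sums

variable {d k : ℕ} {Δ : Fin (k+1) → Set (Fin d → ℝ)}

lemma nonempty_of_sum_nonempty (h : (∑ i, Δ i).Nonempty) (i : Fin (k+1)) : (Δ i).Nonempty := by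
  obtain ⟨x, hx⟩ := h
  rw [Set.mem_fintype_sum] at hx
  obtain ⟨g, hg, -⟩ := hx
  exact ⟨g i, hg i⟩

lemma minPair_sum (hlat : ∀ i, IsLatticePolytope (Δ i)) (hne : ∀ i, (Δ i).Nonempty)
    (u : Fin d → ℝ) : minPair (∑ i, Δ i) u = ∑ i, minPair (Δ i) u := by
  have hL : IsLeast ((fun x => pairing x u) '' (∑ i, Δ i)) (∑ i, minPair (Δ i) u) := by
    constructor
    · choose g hg hg' using fun i => minPair_exists (hlat i) (hne i) u
      refine ⟨∑ i, g i, ?_, ?_⟩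
      · rw [Set.mem_fintype_sum]; exact ⟨g, hg, rfl⟩
      · show pairing (∑ i, g i) u = _
        rw [pairing_sum_left]; exact Finset.sum_congr rfl fun i _ => hg' i
    · rintro y ⟨x, hx, rfl⟩
      rw [Set.mem_fintype_sum] at hx
      obtain ⟨g, hg, rfl⟩ := hx
      show _ ≤ pairing (∑ i, g i) u
      rw [pairing_sum_left]
      exact Finset.sum_le_sum fun i _ => minPair_le (hlat i) (hne i) (hg i) u
  rw [minPair, hL.csInf_eq]

lemma mem_polarDual_iff {n : ℕ} {P : Set (Fin n → ℝ)} (h : IsLatticePolytope P)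
    (hne : P.Nonempty) (u : Fin n → ℝ) :
    u ∈ polarDual P ↔ -1 ≤ minPair P u := by
  constructor
  · intro hu
    obtain ⟨x, hx, hx'⟩ := minPair_exists h hne u
    rw [← hx']; exact hu x hx
  · intro hu x hx
    exact hu.trans (minPair_le h hne hx u)

end sums

section cone

variable {d k : ℕ} {Δ : Fin (k+1) → Set (Fin d → ℝ)}

lemma mem_dualCone_iff (hlat : ∀ i, IsLatticePolytope (Δ i)) (hne : ∀ i, (Δ i).Nonempty)
    (y : Vdk d (k+1)) :
    y ∈ dualConeV (cayleyCone Δ) ↔ ∀ i, 0 ≤ minPair (Δ i) y.1 + y.2 i := by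
  constructor
  · intro hy i
    obtain ⟨x, hx, hx'⟩ := minPair_exists (hlat i) (hne i) y.1
    have hx2 : x ∈ ∑ j, (Pi.single i 1 : Fin (k+1) → ℝ) j • Δ j := by
      rw [Set.mem_fintype_sum]
      refine ⟨fun j => if j = i then x else 0, fun j => ?_, by simp⟩
      by_cases hji : j = i
      · subst hji; simp only [Pi.single_apply, if_pos rfl]
        exact ⟨x, hx, one_smul _ _⟩
      · simp [hji, Pi.single_apply, Set.zero_smul_set (hne j)]
    have hmem : ((x, Pi.single i 1) : Vdk d (k+1)) ∈ cayleyCone Δ := by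
      refine ⟨fun j => ?_, hx2⟩
      by_cases hji : j = i <;> simp [hji, Pi.single_apply]
    have := hy _ hmem
    rwa [pairingV, hx', pairing_single_left, one_mul] at this
  · intro hy p hp
    obtain ⟨ht, hx⟩ := hp
    rw [Set.mem_fintype_sum] at hx
    obtain ⟨g, hg, hgsum⟩ := hx
    have key : ∀ i, p.2 i * (minPair (Δ i) y.1 + y.2 i) ≤ pairing (g i) y.1 + p.2 i * y.2 i := by
      intro i
      obtain ⟨z, hz, hz'⟩ := Set.mem_smul_set.mp (hg i)
      rw [← hz', pairing_smul_left, mul_add]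
      gcongr
      · exact ht i
      · exact minPair_le (hlat i) (hne i) hz y.1
    show 0 ≤ pairing p.1 y.1 + pairing p.2 y.2
    rw [← hgsum, pairing_sum_left, pairing]
    calc (0:ℝ) ≤ ∑ i, p.2 i * (minPair (Δ i) y.1 + y.2 i) :=
          Finset.sum_nonneg fun i _ => mul_nonneg (ht i) (by linarith [hy i])
      _ ≤ ∑ i, (pairing (g i) y.1 + p.2 i * y.2 i) := Finset.sum_le_sum fun i _ => key i
      _ = ∑ i, pairing (g i) y.1 + ∑ i, p.2 i * y.2 i := Finset.sum_add_distrib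

end cone

section hulls

variable {d k : ℕ} {Δ : Fin (k+1) → Set (Fin d → ℝ)}

lemma zero_mem_polarDual (P : Set (Fin d → ℝ)) : (0 : Fin d → ℝ) ∈ polarDual P := by
  intro x _
  rw [pairing_zero_right]
  norm_num

lemma sum_nonempty (h0 : (0 : Fin d → ℝ) ∈ interior (∑ i, Δ i)) : (∑ i, Δ i).Nonempty :=
  ⟨0, interior_subset h0⟩

/-- Normalization: write `v = λ • u'` with `u' ∈ Δ*` and `λ = -min⟨Δ, v⟩`. -/
lemma normalize_pack (hlat : ∀ i, IsLatticePolytope (Δ i)) (hne : ∀ i, (Δ i).Nonempty)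
    (hΔ : IsLatticePolytope (∑ i, Δ i)) (h0 : (0 : Fin d → ℝ) ∈ interior (∑ i, Δ i))
    (v : Fin d → ℝ) :
    ∃ u' : Fin d → ℝ, u' ∈ polarDual (∑ i, Δ i) ∧ 0 ≤ -minPair (∑ i, Δ i) v ∧
      (-minPair (∑ i, Δ i) v) • u' = v ∧
      ∀ j, (-minPair (∑ i, Δ i) v) * minPair (Δ j) u' = minPair (Δ j) v := by
  have hsne := sum_nonempty h0
  by_cases hv : v = 0
  · subst hv
    refine ⟨0, zero_mem_polarDual _, ?_, ?_, ?_⟩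
    · rw [minPair_zero hΔ hsne]; norm_num
    · simp
    · intro j
      rw [minPair_zero hΔ hsne, minPair_zero (hlat j) (hne j)]
      ring
  · have hneg : minPair (∑ i, Δ i) v < 0 := minPair_neg_of_interior hΔ h0 hv
    set lam : ℝ := -minPair (∑ i, Δ i) v with hlam
    have hlampos : 0 < lam := by simp [hlam]; linarith
    refine ⟨lam⁻¹ • v, ?_, hlampos.le, smul_inv_smul₀ hlampos.ne' v, fun j => ?_⟩
    · rw [mem_polarDual_iff hΔ hsne, minPair_smul hΔ hsne (inv_nonneg.mpr hlampos.le)]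
      rw [show minPair (∑ i, Δ i) v = -lam by simp [hlam]]
      rw [mul_neg, inv_mul_cancel₀ hlampos.ne']
    · rw [minPair_smul (hlat j) (hne j) (inv_nonneg.mpr hlampos.le)]
      field_simp

lemma mem_hull_of_rep {m : ℕ} {E : Type*} [AddCommGroup E] [Module ℝ E] {s : Set E}
    (w : Fin m → ℝ) (pt : Fin m → E) (hw : ∀ j, 0 ≤ w j) (hsum : ∑ j, w j = 1)
    (hpt : ∀ j, pt j ∈ s) {q : E} (hq : q = ∑ j, w j • pt j) : q ∈ convexHull ℝ s := by
  subst hq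
  exact (convex_convexHull ℝ s).sum_mem (fun j _ => hw j) hsum
    (fun j _ => subset_convexHull ℝ s (hpt j))

end hulls

section Qlemma

variable {d k : ℕ} {Δ : Fin (k+1) → Set (Fin d → ℝ)}

lemma smul_add_fst (a b : ℝ) (x y : Vdk d k) : (a • x + b • y).1 = a • x.1 + b • y.1 := rfl

lemma smul_add_snd_apply (a b : ℝ) (x y : Vdk d k) (i : Fin k) :
    (a • x + b • y).2 i = a * x.2 i + b * y.2 i := rfl

lemma sum_smul_add_snd (a b : ℝ) (x y : Vdk d k) :
    ∑ i, (a • x + b • y).2 i = a * ∑ i, x.2 i + b * ∑ i, y.2 i := by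
  simp only [smul_add_snd_apply, Finset.sum_add_distrib, Finset.mul_sum]

lemma Q_eq (hlat : ∀ i, IsLatticePolytope (Δ i)) (hne : ∀ i, (Δ i).Nonempty)
    (hΔ : IsLatticePolytope (∑ i, Δ i)) (h0 : (0 : Fin d → ℝ) ∈ interior (∑ i, Δ i)) :
    convexHull ℝ
        ((fun u => ((u, fun i : Fin k => -(minPair (Δ i.succ) u)) : Vdk d k)) ''
            polarDual (∑ i, Δ i) ∪
          ⋃ i : Fin k, {(((0 : Fin d → ℝ), Pi.single i 1) : Vdk d k)}) =
      {q : Vdk d k | (∀ i, 0 ≤ q.2 i + minPair (Δ i.succ) q.1) ∧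
        0 ≤ 1 - ∑ i, q.2 i + minPair (Δ 0) q.1} := by
  have hsne := sum_nonempty h0
  apply Set.Subset.antisymm
  · apply convexHull_min
    · rintro q (⟨u, hu, rfl⟩ | hq)
      · constructor
        · intro i
          show 0 ≤ -(minPair (Δ i.succ) u) + minPair (Δ i.succ) u
          simp
        · show 0 ≤ 1 - ∑ i : Fin k, -(minPair (Δ i.succ) u) + minPair (Δ 0) u
          rw [mem_polarDual_iff hΔ hsne, minPair_sum hlat hne, Fin.sum_univ_succ] at hu
          simp only [Finset.sum_neg_distrib]
          linarith
      · simp only [Set.mem_iUnion, Set.mem_singleton_iff] at hq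
        obtain ⟨i, rfl⟩ := hq
        constructor
        · intro j
          show 0 ≤ (Pi.single i 1 : Fin k → ℝ) j + minPair (Δ j.succ) 0
          rw [minPair_zero (hlat j.succ) (hne j.succ), Pi.single_apply]
          positivity
        · show 0 ≤ 1 - ∑ j : Fin k, (Pi.single i 1 : Fin k → ℝ) j + minPair (Δ 0) 0
          rw [minPair_zero (hlat 0) (hne 0), Finset.sum_pi_single']
          simp
    · -- convexity
      intro x hx y hy a b ha hb hab
      have hcv : ∀ j, a * minPair (Δ j) x.1 + b * minPair (Δ j) y.1 ≤
          minPair (Δ j) ((a • x + b • y).1) := by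
        intro j
        rw [smul_add_fst]
        exact minPair_concave (hlat j) (hne j) ha hb x.1 y.1
      constructor
      · intro i
        have h1 : 0 ≤ a * (x.2 i + minPair (Δ i.succ) x.1) := mul_nonneg ha (hx.1 i)
        have h2 : 0 ≤ b * (y.2 i + minPair (Δ i.succ) y.1) := mul_nonneg hb (hy.1 i)
        have := hcv i.succ
        rw [smul_add_snd_apply]
        nlinarith
      · have h1 : 0 ≤ a * (1 - ∑ i, x.2 i + minPair (Δ 0) x.1) := mul_nonneg ha hx.2
        have h2 : 0 ≤ b * (1 - ∑ i, y.2 i + minPair (Δ 0) y.1) := mul_nonneg hb hy.2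
        have := hcv 0
        rw [sum_smul_add_snd]
        nlinarith
  · rintro q ⟨hq1, hq2⟩
    obtain ⟨u', hu', hlam0, hlamsmul, hlammul⟩ :=
      normalize_pack hlat hne hΔ h0 q.1
    set lam : ℝ := -minPair (∑ i, Δ i) q.1 with hlamdef
    set s : ℝ := 1 - ∑ i, q.2 i + minPair (Δ 0) q.1 with hsdef
    set μ : Fin k → ℝ := fun i => q.2 i + minPair (Δ i.succ) q.1 with hμdef
    set z : Vdk d k := (u', fun i => -(minPair (Δ i.succ) u')) with hzdef
    set z0 : Vdk d k := ((0 : Fin d → ℝ), fun i => -(minPair (Δ i.succ) (0 : Fin d → ℝ)))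
      with hz0def
    set w : Fin (k+2) → ℝ := Fin.cases lam (Fin.cases s μ) with hwdef
    set pt : Fin (k+2) → Vdk d k :=
      Fin.cases z (Fin.cases z0 (fun i => ((0 : Fin d → ℝ), Pi.single i 1))) with hptdef
    have hfsum : minPair (∑ i, Δ i) q.1 = minPair (Δ 0) q.1 + ∑ i : Fin k,
        minPair (Δ i.succ) q.1 := by
      rw [minPair_sum hlat hne, Fin.sum_univ_succ]
    apply mem_hull_of_rep w pt
    · intro j
      induction j using Fin.cases with
      | zero => simpa [hwdef] using hlam0
      | succ j' =>
        induction j' using Fin.cases with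
        | zero =>
          simp only [hwdef, Fin.cases_succ, Fin.cases_zero]
          exact hq2
        | succ i => simpa [hwdef] using hq1 i
    · rw [Fin.sum_univ_succ, Fin.sum_univ_succ]
      simp only [hwdef, Fin.cases_zero, Fin.cases_succ]
      have hμsum : ∑ i, μ i = ∑ i, q.2 i + ∑ i : Fin k, minPair (Δ i.succ) q.1 := by
        simp [hμdef, Finset.sum_add_distrib]
      rw [hμsum, hlamdef, hsdef, hfsum]
      ring
    · intro j
      induction j using Fin.cases with
      | zero =>
        simp only [hptdef, Fin.cases_zero]
        exact Or.inl ⟨u', hu', rfl⟩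
      | succ j' =>
        induction j' using Fin.cases with
        | zero =>
          simp only [hptdef, Fin.cases_zero, Fin.cases_succ]
          exact Or.inl ⟨0, zero_mem_polarDual _, rfl⟩
        | succ i =>
          simp only [hptdef, Fin.cases_succ]
          exact Or.inr (Set.mem_iUnion.mpr ⟨i, rfl⟩)
    · rw [Fin.sum_univ_succ, Fin.sum_univ_succ]
      simp only [hwdef, hptdef, Fin.cases_zero, Fin.cases_succ]
      apply Prod.ext
      · simp only [Prod.fst_add, Prod.smul_fst, Prod.fst_sum, hzdef, hz0def, smul_zero,
          add_zero, Finset.sum_const_zero]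
        exact hlamsmul.symm
      · funext i
        have hz0i : ∀ i : Fin k, minPair (Δ i.succ) (0 : Fin d → ℝ) = 0 := fun i =>
          minPair_zero (hlat i.succ) (hne i.succ)
        simp only [Prod.snd_add, Prod.smul_snd, Prod.snd_sum, Pi.add_apply, Pi.smul_apply,
          smul_eq_mul, Finset.sum_apply, hzdef, hz0def, hz0i]
        have hsingle : ∑ j : Fin k, μ j * (Pi.single j 1 : Fin k → ℝ) i = μ i := by
          rw [Finset.sum_eq_single i]
          · simp
          · intro b _ hb; simp [Pi.single_apply, hb]
          · simp
        have : lam * minPair (Δ i.succ) u' = minPair (Δ i.succ) q.1 := hlammul i.succ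
        rw [hsingle]
        simp only [mul_neg, hμdef]
        rw [this]
        ring

end Qlemma

section partI

variable {d k : ℕ} {Δ : Fin (k+1) → Set (Fin d → ℝ)}

/-- `R₁`: inequality description of the shifted dilated polytope in part (i). -/
def R1 (Δ : Fin (k+1) → Set (Fin d → ℝ)) : Set (Vdk d k) :=
  {q | (∀ i, 0 ≤ q.2 i + 1 + minPair (Δ i.succ) q.1) ∧
    0 ≤ 1 - ∑ i, q.2 i + minPair (Δ 0) q.1}

lemma RHSI_eq (hlat : ∀ i, IsLatticePolytope (Δ i)) (hne : ∀ i, (Δ i).Nonempty) :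
    (fun y : Vdk d k => y - (((0 : Fin d → ℝ), fun _ => 1) : Vdk d k)) ''
      ((((k : ℝ) + 1)) • {q : Vdk d k | (∀ i, 0 ≤ q.2 i + minPair (Δ i.succ) q.1) ∧
          0 ≤ 1 - ∑ i, q.2 i + minPair (Δ 0) q.1}) = R1 Δ := by
  have hK : (0:ℝ) < (k:ℝ) + 1 := by positivity
  ext q
  constructor
  · rintro ⟨y, hy, rfl⟩
    obtain ⟨v, ⟨hv1, hv2⟩, rfl⟩ := hy
    have hfst : ((((k:ℝ)+1) • v - (((0 : Fin d → ℝ), fun _ => 1) : Vdk d k))).1 =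
        ((k:ℝ)+1) • v.1 := by
      show ((k:ℝ)+1) • v.1 - 0 = _
      rw [sub_zero]
    have hsnd : ∀ i, ((((k:ℝ)+1) • v - (((0 : Fin d → ℝ), fun _ => 1) : Vdk d k))).2 i =
        ((k:ℝ)+1) * v.2 i - 1 := fun i => rfl
    have hmp : ∀ j, minPair (Δ j) (((k:ℝ)+1) • v.1) = ((k:ℝ)+1) * minPair (Δ j) v.1 :=
      fun j => minPair_smul (hlat j) (hne j) hK.le v.1
    constructor
    · intro i
      rw [hsnd i, hfst, hmp]
      have := mul_nonneg hK.le (hv1 i)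
      nlinarith
    · rw [hfst, hmp]
      have hs : ∑ i, ((((k:ℝ)+1) • v - (((0 : Fin d → ℝ), fun _ => 1) : Vdk d k))).2 i =
          ((k:ℝ)+1) * ∑ i, v.2 i - k := by
        simp only [hsnd, Finset.sum_sub_distrib, Finset.mul_sum]
        simp
      rw [hs]
      have := mul_nonneg hK.le hv2
      nlinarith
  · rintro ⟨hq1, hq2⟩
    refine ⟨q + (((0 : Fin d → ℝ), fun _ => 1) : Vdk d k), ?_, add_sub_cancel_right q _⟩
    rw [Set.mem_smul_set_iff_inv_smul_mem₀ hK.ne']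
    have hfst : ((((k:ℝ)+1)⁻¹ • (q + (((0 : Fin d → ℝ), fun _ => 1) : Vdk d k)))).1 =
        ((k:ℝ)+1)⁻¹ • q.1 := by
      show ((k:ℝ)+1)⁻¹ • (q.1 + 0) = _
      rw [add_zero]
    have hsnd : ∀ i, ((((k:ℝ)+1)⁻¹ • (q + (((0 : Fin d → ℝ), fun _ => 1) : Vdk d k)))).2 i =
        ((k:ℝ)+1)⁻¹ * (q.2 i + 1) := fun i => rfl
    have hmp : ∀ j, minPair (Δ j) (((k:ℝ)+1)⁻¹ • q.1) = ((k:ℝ)+1)⁻¹ * minPair (Δ j) q.1 :=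
      fun j => minPair_smul (hlat j) (hne j) (by positivity) q.1
    constructor
    · intro i
      rw [hsnd i, hfst, hmp]
      have h1 : (0:ℝ) ≤ ((k:ℝ)+1)⁻¹ * (q.2 i + 1 + minPair (Δ i.succ) q.1) :=
        mul_nonneg (by positivity) (hq1 i)
      nlinarith
    · rw [hfst, hmp]
      have hs : ∑ i, ((((k:ℝ)+1)⁻¹ • (q + (((0 : Fin d → ℝ), fun _ => 1) : Vdk d k)))).2 i =
          ((k:ℝ)+1)⁻¹ * (∑ i, q.2 i + k) := by
        simp only [hsnd]
        rw [← Finset.mul_sum, Finset.sum_add_distrib]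
        simp
      rw [hs]
      have h1 : (0:ℝ) ≤ ((k:ℝ)+1)⁻¹ * (1 - ∑ i, q.2 i + minPair (Δ 0) q.1) :=
        mul_nonneg (by positivity) hq2
      have h2 : ((k:ℝ)+1)⁻¹ * ((k:ℝ)+1) = 1 := inv_mul_cancel₀ hK.ne'
      nlinarith

lemma LHSI_eq (hlat : ∀ i, IsLatticePolytope (Δ i)) (hne : ∀ i, (Δ i).Nonempty) :
    (fun p : Vdk d (k+1) => ((p.1, fun i => p.2 i.succ) : Vdk d k)) ''
      ((fun y => y - (((0 : Fin d → ℝ), fun _ => (1:ℝ)) : Vdk d (k+1))) ''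
        {y : Vdk d (k+1) | (∀ i, 0 ≤ minPair (Δ i) y.1 + y.2 i) ∧
          ∑ i, y.2 i = (k : ℝ) + 1}) = R1 Δ := by
  ext q
  constructor
  · rintro ⟨p, ⟨y, ⟨hy1, hy2⟩, rfl⟩, rfl⟩
    have hfst : ((y - (((0 : Fin d → ℝ), fun _ => (1:ℝ)) : Vdk d (k+1)))).1 = y.1 := by
      show y.1 - 0 = y.1
      rw [sub_zero]
    have hsnd : ∀ i, ((y - (((0 : Fin d → ℝ), fun _ => (1:ℝ)) : Vdk d (k+1)))).2 i =
        y.2 i - 1 := fun i => rfl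
    constructor
    · intro i
      show 0 ≤ (y - _).2 i.succ + 1 + minPair (Δ i.succ) (y - _).1
      rw [hsnd, hfst]
      have := hy1 i.succ
      linarith
    · show 0 ≤ 1 - ∑ i : Fin k, (y - _).2 i.succ + minPair (Δ 0) (y - _).1
      simp only [hsnd, hfst]
      have hsum : ∑ i : Fin k, (y.2 i.succ - 1) = ((k:ℝ)+1) - y.2 0 - k := by
        rw [Finset.sum_sub_distrib, ← hy2, Fin.sum_univ_succ]
        simp
      rw [hsum]
      have := hy1 0
      linarith
  · rintro ⟨hq1, hq2⟩
    set y : Vdk d (k+1) :=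
      (q.1, Fin.cases (1 - ∑ i, q.2 i) (fun i => q.2 i + 1)) with hydef
    refine ⟨y - (((0 : Fin d → ℝ), fun _ => (1:ℝ)) : Vdk d (k+1)), ⟨y, ⟨?_, ?_⟩, rfl⟩, ?_⟩
    · intro i
      induction i using Fin.cases with
      | zero => simp only [hydef, Fin.cases_zero]; linarith
      | succ j => simp only [hydef, Fin.cases_succ]; linarith [hq1 j]
    · show ∑ i : Fin (k+1), (Fin.cases (1 - ∑ i, q.2 i) (fun i => q.2 i + 1) : Fin (k+1) → ℝ) i
          = (k : ℝ) + 1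
      rw [Fin.sum_univ_succ]
      simp only [Fin.cases_zero, Fin.cases_succ, Finset.sum_add_distrib]
      simp only [Finset.sum_const, Finset.card_univ, Fintype.card_fin, nsmul_eq_mul, mul_one]
      ring
    · apply Prod.ext
      · show y.1 - 0 = q.1
        rw [sub_zero]
      · funext i
        show y.2 i.succ - 1 = q.2 i
        simp [hydef]

end partI

section partII

variable {d k : ℕ} {Δ : Fin (k+1) → Set (Fin d → ℝ)}

lemma estar_zero_apply (j : Fin k) : (estar 0 : Fin k → ℝ) j = -1 := by simp [estar]

lemma estar_succ_apply (i : Fin k) (j : Fin k) :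
    (estar i.succ : Fin k → ℝ) j = (Pi.single i 1 : Fin k → ℝ) j := by simp [estar]

lemma single_sum_eval (g : Fin k → ℝ) (j : Fin k) :
    ∑ i : Fin k, g i * (Pi.single i 1 : Fin k → ℝ) j = g j := by
  rw [Finset.sum_eq_single j]
  · simp
  · intro b _ hb; simp [Pi.single_apply, hb]
  · simp

lemma sum_estar_apply (g : Fin (k+1) → ℝ) (j : Fin k) :
    (∑ i : Fin (k+1), g i • estar i : Fin k → ℝ) j = -(g 0) + g j.succ := by
  rw [Finset.sum_apply, Fin.sum_univ_succ]
  simp only [Pi.smul_apply, smul_eq_mul]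
  rw [estar_zero_apply]
  rw [Finset.sum_congr rfl (fun i _ => by rw [estar_succ_apply i j]), single_sum_eval]
  ring

lemma gammaII (g : Fin (k+1) → ℝ) (j : Fin k) :
    (-(∑ i : Fin (k+1), g i • estar i) : Fin k → ℝ) j = g 0 - g j.succ := by
  rw [Pi.neg_apply, sum_estar_apply]
  ring

/-- `R₂`: inequality description of `π(σ̄∨₍₁₎)` (all constraints multiplied by `k+1`). -/
def R2 (Δ : Fin (k+1) → Set (Fin d → ℝ)) : Set (Vdk d k) :=
  {q | 0 ≤ 1 - ∑ i, q.2 i + ((k:ℝ)+1) * minPair (Δ 0) q.1 ∧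
    ∀ i : Fin k, 0 ≤ ((k:ℝ)+1) * q.2 i + (1 - ∑ j, q.2 j) +
      ((k:ℝ)+1) * minPair (Δ i.succ) q.1}

lemma R2_eq (hlat : ∀ i, IsLatticePolytope (Δ i)) (hne : ∀ i, (Δ i).Nonempty)
    (hΔ : IsLatticePolytope (∑ i, Δ i)) (h0 : (0 : Fin d → ℝ) ∈ interior (∑ i, Δ i)) :
    convexHull ℝ
        ((fun u => ((u, -(∑ i : Fin (k+1), minPair (Δ i) u • estar i)) : Vdk d k)) ''
            polarDual (∑ i, Δ i) ∪
          ⋃ i : Fin (k+1), {(((0 : Fin d → ℝ), estar i) : Vdk d k)}) = R2 Δ := by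
  have hsne := sum_nonempty h0
  have hK : (0:ℝ) < (k:ℝ) + 1 := by positivity
  apply Set.Subset.antisymm
  · apply convexHull_min
    · rintro q (⟨u, hu, rfl⟩ | hq)
      · rw [mem_polarDual_iff hΔ hsne, minPair_sum hlat hne, Fin.sum_univ_succ] at hu
        have hγ : ∀ j : Fin k,
            (-(∑ i : Fin (k+1), minPair (Δ i) u • estar i) : Fin k → ℝ) j =
              minPair (Δ 0) u - minPair (Δ j.succ) u := fun j => gammaII _ j
        have hγsum : ∑ j : Fin k,
            (-(∑ i : Fin (k+1), minPair (Δ i) u • estar i) : Fin k → ℝ) j =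
              (k:ℝ) * minPair (Δ 0) u - ∑ j : Fin k, minPair (Δ j.succ) u := by
          rw [Finset.sum_congr rfl fun j _ => hγ j, Finset.sum_sub_distrib]
          simp
        simp only [R2, Set.mem_setOf_eq]
        constructor
        · show (0:ℝ) ≤ 1 - ∑ j : Fin k,
            (-(∑ i : Fin (k+1), minPair (Δ i) u • estar i) : Fin k → ℝ) j +
              ((k:ℝ)+1) * minPair (Δ 0) u
          rw [hγsum]
          linarith
        · intro i
          show (0:ℝ) ≤ ((k:ℝ)+1) *
              (-(∑ i : Fin (k+1), minPair (Δ i) u • estar i) : Fin k → ℝ) i +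
              (1 - ∑ j : Fin k,
                (-(∑ i : Fin (k+1), minPair (Δ i) u • estar i) : Fin k → ℝ) j) +
              ((k:ℝ)+1) * minPair (Δ i.succ) u
          rw [hγ i, hγsum]
          nlinarith
      · simp only [Set.mem_iUnion, Set.mem_singleton_iff] at hq
        obtain ⟨i, rfl⟩ := hq
        have hz : ∀ j : Fin (k+1), minPair (Δ j) (0 : Fin d → ℝ) = 0 := fun j =>
          minPair_zero (hlat j) (hne j)
        simp only [R2, Set.mem_setOf_eq, hz, mul_zero, add_zero]
        induction i using Fin.cases with
        | zero =>
          have he : ∀ j : Fin k, (estar (0 : Fin (k+1)) : Fin k → ℝ) j = -1 :=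
            estar_zero_apply
          constructor
          · show (0:ℝ) ≤ 1 - ∑ j : Fin k, (estar (0 : Fin (k+1)) : Fin k → ℝ) j
            simp only [he]
            simp
            positivity
          · intro i
            show (0:ℝ) ≤ ((k:ℝ)+1) * (estar (0 : Fin (k+1)) : Fin k → ℝ) i +
                (1 - ∑ j : Fin k, (estar (0 : Fin (k+1)) : Fin k → ℝ) j)
            simp only [he]
            simp
            linarith
        | succ i' =>
          have he : ∀ j : Fin k, (estar i'.succ : Fin k → ℝ) j =
              (Pi.single i' 1 : Fin k → ℝ) j := estar_succ_apply i'
          have hes : ∑ j : Fin k, (estar i'.succ : Fin k → ℝ) j = 1 := by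
            simp only [he]
            rw [Finset.sum_pi_single']
            simp
          constructor
          · show (0:ℝ) ≤ 1 - ∑ j : Fin k, (estar i'.succ : Fin k → ℝ) j
            rw [hes]; norm_num
          · intro i
            show (0:ℝ) ≤ ((k:ℝ)+1) * (estar i'.succ : Fin k → ℝ) i +
                (1 - ∑ j : Fin k, (estar i'.succ : Fin k → ℝ) j)
            rw [hes, he, Pi.single_apply]
            by_cases hii : i = i' <;> simp [hii] <;> positivity
    · -- convexity of R2
      intro x hx y hy a b ha hb hab
      have hcv : ∀ j, ((k:ℝ)+1) * (a * minPair (Δ j) x.1 + b * minPair (Δ j) y.1) ≤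
          ((k:ℝ)+1) * minPair (Δ j) ((a • x + b • y).1) := by
        intro j
        apply mul_le_mul_of_nonneg_left _ hK.le
        rw [smul_add_fst]
        exact minPair_concave (hlat j) (hne j) ha hb x.1 y.1
      obtain ⟨hx1, hx2⟩ := hx
      obtain ⟨hy1, hy2⟩ := hy
      constructor
      · have h1 := mul_nonneg ha hx1
        have h2 := mul_nonneg hb hy1
        have := hcv 0
        rw [sum_smul_add_snd]
        nlinarith
      · intro i
        have h1 := mul_nonneg ha (hx2 i)
        have h2 := mul_nonneg hb (hy2 i)
        have := hcv i.succ
        rw [sum_smul_add_snd, smul_add_snd_apply]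
        nlinarith
  · rintro q ⟨hq1, hq2⟩
    obtain ⟨u', hu', hlam0, hlamsmul, hlammul⟩ := normalize_pack hlat hne hΔ h0 q.1
    set lam : ℝ := -minPair (∑ i, Δ i) q.1 with hlamdef
    set A : ℝ := ∑ i, q.2 i with hAdef
    set h0w : ℝ := (1 - A + ((k:ℝ)+1) * minPair (Δ 0) q.1) / ((k:ℝ)+1) with h0wdef
    set hiw : Fin k → ℝ := fun i =>
      (((k:ℝ)+1) * q.2 i + (1 - A) + ((k:ℝ)+1) * minPair (Δ i.succ) q.1) / ((k:ℝ)+1)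
      with hiwdef
    set z : Vdk d k := (u', -(∑ i : Fin (k+1), minPair (Δ i) u' • estar i)) with hzdef
    set w : Fin (k+2) → ℝ := Fin.cases lam (Fin.cases h0w hiw) with hwdef
    set pt : Fin (k+2) → Vdk d k :=
      Fin.cases z (fun j => ((0 : Fin d → ℝ), estar j)) with hptdef
    have hfsum : minPair (∑ i, Δ i) q.1 = minPair (Δ 0) q.1 + ∑ i : Fin k,
        minPair (Δ i.succ) q.1 := by
      rw [minPair_sum hlat hne, Fin.sum_univ_succ]
    apply mem_hull_of_rep w pt
    · intro j
      induction j using Fin.cases with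
      | zero => simpa [hwdef] using hlam0
      | succ j' =>
        induction j' using Fin.cases with
        | zero =>
          simp only [hwdef, Fin.cases_succ, Fin.cases_zero]
          exact div_nonneg hq1 hK.le
        | succ i =>
          simp only [hwdef, Fin.cases_succ]
          exact div_nonneg (hq2 i) hK.le
    · rw [Fin.sum_univ_succ, Fin.sum_univ_succ]
      simp only [hwdef, Fin.cases_zero, Fin.cases_succ]
      have hiwsum : ∑ i, hiw i = (((k:ℝ)+1) * A + (k:ℝ) * (1 - A) +
          ((k:ℝ)+1) * ∑ i : Fin k, minPair (Δ i.succ) q.1) / ((k:ℝ)+1) := by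
        rw [hiwdef, ← Finset.sum_div]
        congr 1
        rw [Finset.sum_add_distrib, Finset.sum_add_distrib, ← Finset.mul_sum, ← Finset.mul_sum]
        simp only [Finset.sum_const, Finset.card_univ, Fintype.card_fin, nsmul_eq_mul]
        rw [hAdef]
      rw [hiwsum, hlamdef, h0wdef, hfsum]
      field_simp
      ring
    · intro j
      induction j using Fin.cases with
      | zero =>
        simp only [hptdef, Fin.cases_zero]
        exact Or.inl ⟨u', hu', rfl⟩
      | succ j' =>
        simp only [hptdef, Fin.cases_succ]
        exact Or.inr (Set.mem_iUnion.mpr ⟨j', rfl⟩)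
    · rw [Fin.sum_univ_succ]
      simp only [hwdef, hptdef, Fin.cases_zero, Fin.cases_succ]
      apply Prod.ext
      · simp only [Prod.fst_add, Prod.smul_fst, Prod.fst_sum, hzdef, smul_zero,
          Finset.sum_const_zero, add_zero]
        exact hlamsmul.symm
      · funext i
        simp only [Prod.snd_add, Prod.smul_snd, Prod.snd_sum, Pi.add_apply, Pi.smul_apply,
          smul_eq_mul, Finset.sum_apply, hzdef]
        have h1 : (-(∑ i : Fin (k+1), minPair (Δ i) u' • estar i) : Fin k → ℝ) i =
            minPair (Δ 0) u' - minPair (Δ i.succ) u' := gammaII _ i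
        have h2 : ∑ j : Fin (k+1),
            (Fin.cases h0w hiw : Fin (k+1) → ℝ) j * (estar j : Fin k → ℝ) i =
            -h0w + hiw i := by
          rw [Fin.sum_univ_succ]
          simp only [Fin.cases_zero, Fin.cases_succ, estar_zero_apply]
          rw [Finset.sum_congr rfl (fun j _ => by rw [estar_succ_apply j i]), single_sum_eval]
          ring
        rw [h1, h2]
        have h3 : lam * (minPair (Δ 0) u' - minPair (Δ i.succ) u') =
            minPair (Δ 0) q.1 - minPair (Δ i.succ) q.1 := by
          rw [mul_sub, hlammul 0, hlammul i.succ]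
        rw [mul_comm lam, ← mul_comm lam, h3, h0wdef, hiwdef]
        field_simp
        ring

end partII

section partII2

variable {d k : ℕ} {Δ : Fin (k+1) → Set (Fin d → ℝ)}

lemma LHSII_eq (hlat : ∀ i, IsLatticePolytope (Δ i)) (hne : ∀ i, (Δ i).Nonempty) :
    (fun p : Vdk d (k+1) => ((p.1, fun i => p.2 i.succ - p.2 0) : Vdk d k)) ''
      {y : Vdk d (k+1) | (∀ i, 0 ≤ minPair (Δ i) y.1 + y.2 i) ∧ ∑ i, y.2 i = 1} = R2 Δ := by
  have hK : (0:ℝ) < (k:ℝ) + 1 := by positivity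
  ext q
  constructor
  · rintro ⟨y, ⟨hy1, hy2⟩, rfl⟩
    have hsum : ∑ i : Fin k, (y.2 i.succ - y.2 0) = 1 - ((k:ℝ)+1) * y.2 0 := by
      rw [Finset.sum_sub_distrib]
      have : ∑ i : Fin k, y.2 i.succ = 1 - y.2 0 := by
        have := hy2
        rw [Fin.sum_univ_succ] at this
        linarith
      rw [this]
      simp only [Finset.sum_const, Finset.card_univ, Fintype.card_fin, nsmul_eq_mul]
      ring
    constructor
    · show (0:ℝ) ≤ 1 - ∑ i : Fin k, (y.2 i.succ - y.2 0) + ((k:ℝ)+1) * minPair (Δ 0) y.1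
      rw [hsum]
      have h := mul_nonneg hK.le (hy1 0)
      nlinarith
    · intro i
      show (0:ℝ) ≤ ((k:ℝ)+1) * (y.2 i.succ - y.2 0) +
          (1 - ∑ j : Fin k, (y.2 j.succ - y.2 0)) + ((k:ℝ)+1) * minPair (Δ i.succ) y.1
      rw [hsum]
      have h := mul_nonneg hK.le (hy1 i.succ)
      nlinarith
  · rintro ⟨hq1, hq2⟩
    set t : ℝ := (1 - ∑ i, q.2 i) / ((k:ℝ)+1) with htdef
    set y : Vdk d (k+1) := (q.1, Fin.cases t (fun i => q.2 i + t)) with hydef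
    refine ⟨y, ⟨?_, ?_⟩, ?_⟩
    · intro i
      induction i using Fin.cases with
      | zero =>
        show 0 ≤ minPair (Δ 0) q.1 +
            (Fin.cases t (fun i => q.2 i + t) : Fin (k+1) → ℝ) 0
        simp only [Fin.cases_zero]
        have key : minPair (Δ 0) q.1 + t =
            (1 - ∑ i, q.2 i + ((k:ℝ)+1) * minPair (Δ 0) q.1) / ((k:ℝ)+1) := by
          rw [htdef]
          field_simp
          ring
        rw [key]
        exact div_nonneg hq1 hK.le
      | succ j =>
        show 0 ≤ minPair (Δ j.succ) q.1 +
            (Fin.cases t (fun i => q.2 i + t) : Fin (k+1) → ℝ) j.succ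
        simp only [Fin.cases_succ]
        have key : minPair (Δ j.succ) q.1 + (q.2 j + t) =
            (((k:ℝ)+1) * q.2 j + (1 - ∑ i, q.2 i) +
              ((k:ℝ)+1) * minPair (Δ j.succ) q.1) / ((k:ℝ)+1) := by
          rw [htdef]
          field_simp
          ring
        rw [key]
        exact div_nonneg (hq2 j) hK.le
    · show ∑ i : Fin (k+1), (Fin.cases t (fun i => q.2 i + t) : Fin (k+1) → ℝ) i = 1
      rw [Fin.sum_univ_succ]
      simp only [Fin.cases_zero, Fin.cases_succ, Finset.sum_add_distrib]
      simp only [Finset.sum_const, Finset.card_univ, Fintype.card_fin, nsmul_eq_mul]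
      rw [htdef]
      field_simp
      ring
    · apply Prod.ext
      · rfl
      · funext i
        show (Fin.cases t (fun i => q.2 i + t) : Fin (k+1) → ℝ) i.succ -
            (Fin.cases t (fun i => q.2 i + t) : Fin (k+1) → ℝ) 0 = q.2 i
        simp only [Fin.cases_succ, Fin.cases_zero]
        ring

end partII2

/-- description of the reflexive polytope `σ̄∨_{(k+1)} − n_σ̄` and of the slice
`π(σ̄∨_{(1)})` for the dual of the Cayley cone `σ̄`. -/
theorem dual_cayley_slices {d k : ℕ}
    (Δ : Fin (k+1) → Set (Fin d → ℝ))
    (hlat : ∀ i, IsLatticePolytope (Δ i))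
    (hrefl : IsReflexive (∑ i, Δ i))
    -- distinguished points n_σ̄ = r₀* + ⋯ + r_k* and m_σ̄∨ = r₀ + ⋯ + r_k
    (nbar mbar : Vdk d (k+1))
    (hn : nbar = ((0 : Fin d → ℝ), fun _ => 1))
    (hm : mbar = ((0 : Fin d → ℝ), fun _ => 1))
    -- ∇̂₀ = Conv({u − Σᵢ₌₁ᵏ min⟨Δᵢ,u⟩eᵢ* : u ∈ Δ*} ∪ {e₁*, …, e_k*}) ⊆ ℝ^d ⊕ ℝ^k
    (Q : Set (Vdk d k))
    (hQ : Q = convexHull ℝ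
        ((fun u => ((u, fun i : Fin k => -(minPair (Δ i.succ) u)) : Vdk d k)) ''
            polarDual (∑ i, Δ i) ∪
          ⋃ i : Fin k, {(((0 : Fin d → ℝ), Pi.single i 1) : Vdk d k)})) :
    -- (i) (n, α₀, …, α_k) ↦ (n, α₁, …, α_k) maps σ̄∨_{(k+1)} − n_σ̄ bijectively onto
    --     (k+1)·∇̂₀ − (e₁* + ⋯ + e_k*)
    Set.BijOn (fun p : Vdk d (k+1) => ((p.1, fun i => p.2 i.succ) : Vdk d k))
      ((fun y => y - nbar) ''
        {y ∈ dualConeV (cayleyCone Δ) | pairingV mbar y = (k : ℝ) + 1})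
      ((fun y => y - (((0 : Fin d → ℝ), fun _ => 1) : Vdk d k)) '' (((k : ℝ) + 1) • Q)) ∧
    -- (ii) π(σ̄∨_{(1)}) = Conv({u − Σᵢ₌₀ᵏ min⟨Δᵢ,u⟩eᵢ* : u ∈ Δ*} ∪ {e₀*, e₁*, …, e_k*})
    (fun p : Vdk d (k+1) => ((p.1, fun i => p.2 i.succ - p.2 0) : Vdk d k)) ''
        {y ∈ dualConeV (cayleyCone Δ) | pairingV mbar y = 1} =
      convexHull ℝ
        ((fun u => ((u, -(∑ i : Fin (k+1), minPair (Δ i) u • estar i)) : Vdk d k)) ''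
            polarDual (∑ i, Δ i) ∪
          ⋃ i : Fin (k+1), {(((0 : Fin d → ℝ), estar i) : Vdk d k)}) := by

  subst hn hm
  obtain ⟨hΔ, h0, -⟩ := hrefl
  have hne : ∀ i, (Δ i).Nonempty := nonempty_of_sum_nonempty (sum_nonempty h0)
  have hpair : ∀ y : Vdk d (k+1),
      pairingV (((0 : Fin d → ℝ), fun _ => 1) : Vdk d (k+1)) y = ∑ i, y.2 i := by
    intro y
    show pairing 0 y.1 + pairing (fun _ => 1) y.2 = _
    rw [pairing_zero_left, pairing]
    simp
  have hslice : ∀ c : ℝ,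
      {y | y ∈ dualConeV (cayleyCone Δ) ∧
          pairingV (((0 : Fin d → ℝ), fun _ => 1) : Vdk d (k+1)) y = c} =
        {y : Vdk d (k+1) | (∀ i, 0 ≤ minPair (Δ i) y.1 + y.2 i) ∧ ∑ i, y.2 i = c} := by
    intro c
    ext y
    rw [Set.mem_setOf_eq, Set.mem_setOf_eq, mem_dualCone_iff hlat hne, hpair]
  constructor
  · -- part (i)
    have h1 : (fun p : Vdk d (k+1) => ((p.1, fun i => p.2 i.succ) : Vdk d k)) ''
        ((fun y => y - (((0 : Fin d → ℝ), fun _ => 1) : Vdk d (k+1))) ''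
          {y | y ∈ dualConeV (cayleyCone Δ) ∧
            pairingV (((0 : Fin d → ℝ), fun _ => 1) : Vdk d (k+1)) y = (k : ℝ) + 1}) =
        R1 Δ := by
      rw [hslice ((k:ℝ)+1)]
      exact LHSI_eq hlat hne
    have h2 : (fun y : Vdk d k => y - (((0 : Fin d → ℝ), fun _ => 1) : Vdk d k)) ''
        (((k : ℝ) + 1) • Q) = R1 Δ := by
      rw [hQ, Q_eq hlat hne hΔ h0]
      exact RHSI_eq hlat hne
    refine ⟨?_, ?_, ?_⟩
    · intro p hp
      rw [h2, ← h1]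
      exact Set.mem_image_of_mem _ hp
    · intro p hp p' hp' heq
      obtain ⟨y, hy, rfl⟩ := hp
      obtain ⟨y', hy', rfl⟩ := hp'
      have hy2 : ∑ i, y.2 i = (k : ℝ) + 1 := by rw [← hpair y]; exact hy.2
      have hy2' : ∑ i, y'.2 i = (k : ℝ) + 1 := by rw [← hpair y']; exact hy'.2
      have e1 : y.1 - 0 = y'.1 - 0 := congrArg Prod.fst heq
      have e2 : ∀ i : Fin k, y.2 i.succ - 1 = y'.2 i.succ - 1 := by
        intro i
        exact congrFun (congrArg Prod.snd heq) i
      have e2' : ∀ i : Fin k, y.2 i.succ = y'.2 i.succ := by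
        intro i; have := e2 i; linarith
      have e0 : y.2 0 = y'.2 0 := by
        have hs : ∑ i : Fin k, y.2 i.succ = ∑ i : Fin k, y'.2 i.succ :=
          Finset.sum_congr rfl fun i _ => e2' i
        rw [Fin.sum_univ_succ] at hy2 hy2'
        linarith
      have hyy : y = y' := by
        apply Prod.ext
        · rw [sub_zero, sub_zero] at e1; exact e1
        · funext j
          induction j using Fin.cases with
          | zero => exact e0
          | succ i => exact e2' i
      rw [hyy]
    · rw [h2, ← h1]
      exact Set.image_mono (Set.Subset.refl _)
  · -- part (ii)
    rw [hslice 1, LHSII_eq hlat hne, R2_eq hlat hne hΔ h0]
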